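/- Let α < 0 and β < −√(−2α), and define b:[0,1]→ℝ by b(z) = αz² + βz. Then b'(z) = 2αz + β < 0 and b''(z) + b'(z)² = 2α + (2αz + β)² > 0 for all z ∈ [0,1] (so the quadratic exponentially linked exposure example defines a well-defined distribution). Moreover, the induced density f_Z(z) = −e^{αz² + βz}(4α²z² + 4αβz + β² + 2α)/β on [0,1) is unimodal on [0,1) — i.e. there exists z* ∈ (0,1) with f_Z'(z) > 0 for z ∈ (0, z*) and f_Z'(z) < 0 for z ∈ (z*, 1) — if and only if −√(−6α) < β < −2α − √(−6α). -/

import Mathlib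

set_option maxHeartbeats 1000000

private lemma statement17_deriv (α β z : ℝ) :
    HasDerivAt (fun z : ℝ =>
      -(Real.exp (α * z ^ 2 + β * z) *
          (4 * α ^ 2 * z ^ 2 + 4 * α * β * z + β ^ 2 + 2 * α)) / β)
      (-(Real.exp (α * z ^ 2 + β * z) *
          ((2 * α * z + β) * ((2 * α * z + β) ^ 2 + 6 * α))) / β) z := by
  have h1 : HasDerivAt (fun z : ℝ => α * z ^ 2 + β * z) (2 * α * z + β) z := by
    have h := ((hasDerivAt_pow 2 z).const_mul α).add ((hasDerivAt_id z).const_mul β)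
    refine h.congr_deriv ?_
    push_cast; ring
  have h2 : HasDerivAt (fun z : ℝ => 4 * α ^ 2 * z ^ 2 + 4 * α * β * z + β ^ 2 + 2 * α)
      (8 * α ^ 2 * z + 4 * α * β) z := by
    have h := (((hasDerivAt_pow 2 z).const_mul (4 * α ^ 2)).add
      ((hasDerivAt_id z).const_mul (4 * α * β))).add_const (β ^ 2 + 2 * α)
    rw [show (fun z : ℝ => 4 * α ^ 2 * z ^ 2 + 4 * α * β * z + β ^ 2 + 2 * α) =
      fun x => (4 * α ^ 2 * x ^ 2 + 4 * α * β * x) + (β ^ 2 + 2 * α) by ext x; ring]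
    refine h.congr_deriv ?_
    push_cast; ring
  have h3 := ((h1.exp.mul h2).neg).div_const β
  refine h3.congr_deriv ?_
  ring

theorem statement17 (α β : ℝ) (hα : α < 0) (hβ : β < -Real.sqrt (-2 * α)) :
    let f : ℝ → ℝ := fun z =>
      -(Real.exp (α * z ^ 2 + β * z) *
          (4 * α ^ 2 * z ^ 2 + 4 * α * β * z + β ^ 2 + 2 * α)) / β
    (∀ z ∈ Set.Icc (0:ℝ) 1, 2 * α * z + β < 0) ∧
    (∀ z ∈ Set.Icc (0:ℝ) 1, 0 < 2 * α + (2 * α * z + β) ^ 2) ∧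
    ((∃ zs ∈ Set.Ioo (0:ℝ) 1,
        (∀ z ∈ Set.Ioo 0 zs, 0 < deriv f z) ∧ (∀ z ∈ Set.Ioo zs 1, deriv f z < 0))
      ↔ (-Real.sqrt (-6 * α) < β ∧ β < -2 * α - Real.sqrt (-6 * α))) := by
  intro f
  have hs2 : Real.sqrt (-2 * α) ^ 2 = -2 * α := Real.sq_sqrt (by linarith)
  have hs2nn : 0 ≤ Real.sqrt (-2 * α) := Real.sqrt_nonneg _
  have hβ0 : β < 0 := by linarith
  have hβ2 : -2 * α < β ^ 2 := by nlinarith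
  have part1 : ∀ z ∈ Set.Icc (0:ℝ) 1, 2 * α * z + β < 0 := by
    intro z hz
    obtain ⟨h0, h1⟩ := hz
    nlinarith
  have part2 : ∀ z ∈ Set.Icc (0:ℝ) 1, 0 < 2 * α + (2 * α * z + β) ^ 2 := by
    intro z hz
    obtain ⟨h0, h1⟩ := hz
    have ht := part1 z ⟨h0, h1⟩
    nlinarith [mul_nonneg (mul_nonneg (by linarith : (0:ℝ) ≤ -2 * α) h0)
      (by linarith : 0 ≤ -(β + (2 * α * z + β)))]
  refine ⟨part1, part2, ?_⟩
  have hβne : β ≠ 0 := ne_of_lt hβ0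
  have hd : ∀ z : ℝ, deriv f z =
      -(Real.exp (α * z ^ 2 + β * z) *
          ((2 * α * z + β) * ((2 * α * z + β) ^ 2 + 6 * α))) / β :=
    fun z => (statement17_deriv α β z).deriv
  -- sign lemmas
  have sign_pos : ∀ z : ℝ, 2 * α * z + β < 0 →
      (0 < deriv f z ↔ (2 * α * z + β) ^ 2 + 6 * α < 0) := by
    intro z htz
    rw [hd z]
    have hE := Real.exp_pos (α * z ^ 2 + β * z)
    constructor
    · intro h
      by_contra hc
      push_neg at hc
      have h1 : -(Real.exp (α * z ^ 2 + β * z) *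
          ((2 * α * z + β) * ((2 * α * z + β) ^ 2 + 6 * α))) / β * β =
          -(Real.exp (α * z ^ 2 + β * z) *
          ((2 * α * z + β) * ((2 * α * z + β) ^ 2 + 6 * α))) := div_mul_cancel₀ _ hβne
      have h2 := mul_neg_of_pos_of_neg h hβ0
      rw [h1] at h2
      nlinarith [mul_nonneg hE.le (mul_nonneg (by linarith : 0 ≤ -(2 * α * z + β)) hc)]
    · intro h
      have hX : 0 < Real.exp (α * z ^ 2 + β * z) *
          ((2 * α * z + β) * ((2 * α * z + β) ^ 2 + 6 * α)) :=
        mul_pos hE (mul_pos_of_neg_of_neg htz h)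
      have : -(Real.exp (α * z ^ 2 + β * z) *
          ((2 * α * z + β) * ((2 * α * z + β) ^ 2 + 6 * α))) < 0 := by linarith
      exact div_pos_of_neg_of_neg this hβ0
  have sign_neg : ∀ z : ℝ, 2 * α * z + β < 0 →
      (deriv f z < 0 ↔ 0 < (2 * α * z + β) ^ 2 + 6 * α) := by
    intro z htz
    rw [hd z]
    have hE := Real.exp_pos (α * z ^ 2 + β * z)
    constructor
    · intro h
      by_contra hc
      push_neg at hc
      have h1 : -(Real.exp (α * z ^ 2 + β * z) *
          ((2 * α * z + β) * ((2 * α * z + β) ^ 2 + 6 * α))) / β * β =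
          -(Real.exp (α * z ^ 2 + β * z) *
          ((2 * α * z + β) * ((2 * α * z + β) ^ 2 + 6 * α))) := div_mul_cancel₀ _ hβne
      have h2 := mul_pos_of_neg_of_neg h hβ0
      rw [h1] at h2
      nlinarith [mul_nonneg hE.le (mul_nonneg (by linarith : 0 ≤ -(2 * α * z + β))
        (by linarith : 0 ≤ -((2 * α * z + β) ^ 2 + 6 * α)))]
    · intro h
      have hX : Real.exp (α * z ^ 2 + β * z) *
          ((2 * α * z + β) * ((2 * α * z + β) ^ 2 + 6 * α)) < 0 :=
        mul_neg_of_pos_of_neg hE (mul_neg_of_neg_of_pos htz h)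
      have h1 : 0 < -(Real.exp (α * z ^ 2 + β * z) *
          ((2 * α * z + β) * ((2 * α * z + β) ^ 2 + 6 * α))) := by linarith
      exact div_neg_of_pos_of_neg h1 hβ0
  have hs6 : Real.sqrt (-6 * α) ^ 2 = -6 * α := Real.sq_sqrt (by linarith)
  have hs6pos : 0 < Real.sqrt (-6 * α) := Real.sqrt_pos.mpr (by linarith)
  set s := Real.sqrt (-6 * α) with hsdef
  constructor
  · rintro ⟨zs, ⟨hzs0, hzs1⟩, hpos, hneg⟩
    constructor
    · -- use z₁ = zs/2
      have hz1 : zs / 2 ∈ Set.Ioo 0 zs := ⟨by linarith, by linarith⟩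
      have hz1' : (zs / 2 : ℝ) ∈ Set.Icc (0:ℝ) 1 := ⟨by linarith, by linarith⟩
      have ht1 := part1 _ hz1'
      have h1 := (sign_pos _ ht1).mp (hpos _ hz1)
      by_contra hc
      push_neg at hc
      have hαzs : α * zs < 0 := mul_neg_of_neg_of_pos hα hzs0
      nlinarith [mul_pos_of_neg_of_neg
        (show 2 * α * (zs / 2) + β - s < 0 by nlinarith)
        (show 2 * α * (zs / 2) + β + s < 0 by nlinarith)]
    · -- use z₂ = (zs+1)/2
      have hz2 : (zs + 1) / 2 ∈ Set.Ioo zs 1 := ⟨by linarith, by linarith⟩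
      have hz2' : ((zs + 1) / 2 : ℝ) ∈ Set.Icc (0:ℝ) 1 := ⟨by linarith, by linarith⟩
      have ht2 := part1 _ hz2'
      have h2 := (sign_neg _ ht2).mp (hneg _ hz2)
      by_contra hc
      push_neg at hc
      have hαzs1 : 0 < α * (zs - 1) := mul_pos_of_neg_of_neg hα (by linarith)
      have hgt : -s < 2 * α * ((zs + 1) / 2) + β := by nlinarith
      nlinarith [mul_pos (show 0 < s - (2 * α * ((zs + 1) / 2) + β) by linarith)
        (show 0 < s + (2 * α * ((zs + 1) / 2) + β) by linarith)]
  · rintro ⟨hb1, hb2⟩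
    have hden : (0:ℝ) < -2 * α := by linarith
    set zs := (β + s) / (-2 * α) with hzsdef
    have hkey : zs * (-2 * α) = β + s := div_mul_cancel₀ _ (ne_of_gt hden)
    have h0 : 0 < zs := div_pos (by linarith) hden
    have h1 : zs < 1 := (div_lt_one hden).mpr (by linarith)
    refine ⟨zs, ⟨h0, h1⟩, ?_, ?_⟩
    · intro z hz
      obtain ⟨hz0, hzz⟩ := hz
      have hzI : z ∈ Set.Icc (0:ℝ) 1 := ⟨hz0.le, by linarith⟩
      have ht := part1 z hzI
      refine (sign_pos z ht).mpr ?_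
      have hm : 0 < -2 * α * (zs - z) := mul_pos hden (by linarith)
      have hgt : -s < 2 * α * z + β := by nlinarith
      nlinarith [mul_pos (show 0 < s - (2 * α * z + β) by linarith)
        (show 0 < s + (2 * α * z + β) by linarith)]
    · intro z hz
      obtain ⟨hzz, hz1⟩ := hz
      have hzI : z ∈ Set.Icc (0:ℝ) 1 := ⟨by linarith, hz1.le⟩
      have ht := part1 z hzI
      refine (sign_neg z ht).mpr ?_
      have hm : 0 < -2 * α * (z - zs) := mul_pos hden (by linarith)
      have hlt : 2 * α * z + β < -s := by nlinarith
      nlinarith [mul_pos_of_neg_of_neg (show 2 * α * z + β - s < 0 by linarith)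
        (show 2 * α * z + β + s < 0 by linarith)]
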